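/- The number of subgroups of exponent p^i in Z_{p^i} × Z_{p^i} equals 1 + (p+1)(p^i − 1)/(p − 1) = (p^{i+1} + p^i − 2)/(p − 1), for every i ≥ 1. -/

import Mathlib

open AddSubgroup Finset

namespace Stmt2Aux

variable {p i : ℕ}

def F (p i : ℕ) (x : ℕ × ℕ × ℕ) : AddSubgroup (ZMod (p ^ i) × ZMod (p ^ i)) :=
  closure {((p : ZMod (p ^ i)) ^ x.1, (x.2.1 : ZMod (p ^ i))), (0, (p : ZMod (p ^ i)) ^ x.2.2)}

def P (p i : ℕ) (x : ℕ × ℕ × ℕ) : Prop :=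
  x.2.1 < p ^ x.2.2 ∧
    ((x.1 = 0 ∧ x.2.2 ≤ i) ∨ (1 ≤ x.1 ∧ x.1 + x.2.2 ≤ i ∧ (x.2.2 = 0 ∨ ¬ p ∣ x.2.1)))

theorem natCast_pow_eq (a : ℕ) : ((p ^ a : ℕ) : ZMod (p ^ i)) = (p : ZMod (p ^ i)) ^ a := by
  push_cast; rfl

theorem ppow_eq_zero (hp : p ≠ 0) {a : ℕ} (ha : i ≤ a) : (p : ZMod (p ^ i)) ^ a = 0 := by
  rw [← natCast_pow_eq, ZMod.natCast_eq_zero_iff]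
  exact pow_dvd_pow p ha

theorem mem_F {x : ℕ × ℕ × ℕ} {z : ZMod (p ^ i) × ZMod (p ^ i)} :
    z ∈ F p i x ↔ ∃ s t : ℤ,
      s • ((p : ZMod (p ^ i)) ^ x.1, (x.2.1 : ZMod (p ^ i))) +
        t • ((0 : ZMod (p ^ i)), (p : ZMod (p ^ i)) ^ x.2.2) = z :=
  AddSubgroup.mem_closure_pair

theorem dvd_val_of_mem_zmul (hp : p ≠ 0) {c : ℕ} (hc : c ≤ i) {x : ZMod (p ^ i)}
    (hx : x ∈ zmultiples ((p : ZMod (p ^ i)) ^ c)) : p ^ c ∣ x.val := by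
  haveI : NeZero (p ^ i) := ⟨pow_ne_zero i hp⟩
  obtain ⟨t, ht⟩ := hx
  have h1 : (((x.val : ℤ) - t * p ^ c : ℤ) : ZMod (p ^ i)) = 0 := by
    push_cast
    rw [ZMod.natCast_zmod_val]
    rw [← ht]
    push_cast [zsmul_eq_mul]
    ring
  rw [ZMod.intCast_zmod_eq_zero_iff_dvd] at h1
  have h2 : (p : ℤ) ^ c ∣ (x.val : ℤ) := by
    have hpc : (p : ℤ) ^ c ∣ (p : ℤ) ^ i := pow_dvd_pow _ hc
    have := (hpc.trans (by exact_mod_cast h1 : ((p : ℤ) ^ i) ∣ _))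
    have h3 : (p : ℤ) ^ c ∣ t * p ^ c := dvd_mul_left _ _
    have h4 := dvd_add this h3
    push_cast at h4
    rwa [sub_add_cancel] at h4
  exact_mod_cast h2

theorem mem_zmul_of_dvd {c m : ℕ} (h : p ^ c ∣ m) :
    ((m : ℕ) : ZMod (p ^ i)) ∈ zmultiples ((p : ZMod (p ^ i)) ^ c) := by
  obtain ⟨k, rfl⟩ := h
  exact ⟨(k : ℤ), by push_cast [zsmul_eq_mul]; ring⟩

theorem zmul_mono {c c' : ℕ} (h : c ≤ c') :
    zmultiples ((p : ZMod (p ^ i)) ^ c') ≤ zmultiples ((p : ZMod (p ^ i)) ^ c) := by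
  rw [zmultiples_le]
  exact ⟨(p ^ (c' - c) : ℕ), by push_cast [zsmul_eq_mul]; rw [← pow_add]; congr 1; omega⟩

theorem exists_eq_zmul (hp : p.Prime) (K : AddSubgroup (ZMod (p ^ i))) :
    ∃ a ≤ i, K = zmultiples ((p : ZMod (p ^ i)) ^ a) := by
  haveI : NeZero (p ^ i) := ⟨pow_ne_zero i hp.ne_zero⟩
  obtain ⟨g, hg⟩ := Int.subgroup_cyclic (K.comap (Int.castAddHom (ZMod (p ^ i))))
  have hK : K = zmultiples ((g : ZMod (p ^ i))) := by
    have := congrArg (AddSubgroup.map (Int.castAddHom (ZMod (p ^ i)))) hg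
    rwa [AddSubgroup.map_comap_eq_self_of_surjective ZMod.intCast_surjective,
      AddMonoidHom.map_closure, Set.image_singleton, ← zmultiples_eq_closure] at this
  set x : ZMod (p ^ i) := (g : ZMod (p ^ i)) with hxdef
  have hdvd : Nat.gcd (p ^ i) x.val ∣ p ^ i := Nat.gcd_dvd_left _ _
  obtain ⟨a, ha, hpa⟩ := (Nat.dvd_prime_pow hp).mp hdvd
  refine ⟨a, ha, ?_⟩
  rw [hK]
  apply le_antisymm
  · rw [zmultiples_le]
    have hax : p ^ a ∣ x.val := hpa ▸ Nat.gcd_dvd_right _ _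
    have hm := mem_zmul_of_dvd (p := p) (i := i) hax
    rwa [ZMod.natCast_zmod_val] at hm
  · rw [zmultiples_le]
    have hb := Nat.gcd_eq_gcd_ab (p ^ i) x.val
    refine ⟨(Nat.gcdB (p ^ i) x.val), ?_⟩
    show (Nat.gcdB (p ^ i) x.val) • x = _
    rw [zsmul_eq_mul, ← natCast_pow_eq, ← hpa]
    have hcast := congrArg (fun z : ℤ => ((z : ZMod (p ^ i)) : ZMod (p ^ i))) hb
    push_cast at hcast ⊢
    rw [ppow_eq_zero hp.ne_zero (le_refl i), ZMod.natCast_zmod_val] at hcast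
    rw [hcast]
    ring


theorem map_fst_F (x : ℕ × ℕ × ℕ) :
    (F p i x).map (AddMonoidHom.fst (ZMod (p ^ i)) (ZMod (p ^ i))) =
      zmultiples ((p : ZMod (p ^ i)) ^ x.1) := by
  rw [F, AddMonoidHom.map_closure, Set.image_pair]
  simp only [AddMonoidHom.coe_fst]
  apply le_antisymm
  · rw [closure_le]
    intro y hy
    simp only [Set.mem_insert_iff, Set.mem_singleton_iff] at hy
    rcases hy with rfl | rfl
    · exact mem_zmultiples _
    · exact zero_mem _
  · rw [zmultiples_le]
    exact AddSubgroup.subset_closure (Set.mem_insert _ _)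

theorem comap_inl_F (hp : p.Prime) {x : ℕ × ℕ × ℕ} (hx : P p i x) :
    (F p i x).comap (AddMonoidHom.inr (ZMod (p ^ i)) (ZMod (p ^ i))) =
      zmultiples ((p : ZMod (p ^ i)) ^ x.2.2) := by
  obtain ⟨a, b, c⟩ := x
  obtain ⟨hb, hcase⟩ := hx
  dsimp only at hb hcase
  ext y
  simp only [mem_comap, AddMonoidHom.inr_apply, mem_zmultiples_iff]
  rw [mem_F]
  constructor
  · rintro ⟨s, t, hst⟩
    simp only [Prod.smul_mk, Prod.mk_add_mk, Prod.mk.injEq, smul_zero, add_zero] at hst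
    obtain ⟨h1, h2⟩ := hst
    rw [zsmul_eq_mul] at h1
    have h1' : ((s * p ^ a : ℤ) : ZMod (p ^ i)) = 0 := by push_cast; exact h1
    rw [ZMod.intCast_zmod_eq_zero_iff_dvd] at h1'
    push_cast at h1'
    rcases hcase with ⟨rfl, hci⟩ | ⟨ha1, hac, hbc⟩
    · -- a = 0
      rw [pow_zero, mul_one] at h1'
      obtain ⟨k, hk⟩ := h1'
      have hs0 : ((s : ℤ) : ZMod (p ^ i)) = 0 := by
        rw [hk]; push_cast
        rw [ppow_eq_zero hp.ne_zero le_rfl, zero_mul]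
      refine ⟨t, ?_⟩
      rw [← h2]
      simp only [zsmul_eq_mul]
      rw [hs0, zero_mul, zero_add]

    · -- a ≥ 1
      have hpa : (p : ℤ) ^ a ≠ 0 := pow_ne_zero _ (by exact_mod_cast hp.ne_zero)
      obtain ⟨k, hk⟩ := h1'
      have hpow : (p : ℤ) ^ (i - a) * (p : ℤ) ^ a = (p : ℤ) ^ i := by
        rw [← pow_add]; congr 1; omega
      have hs : s = (p : ℤ) ^ (i - a) * k := by
        apply mul_right_cancel₀ hpa
        rw [hk, ← hpow]; ring
      refine ⟨k * (p : ℤ) ^ (i - a - c) * (b : ℤ) + t, ?_⟩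
      rw [← h2, hs]
      simp only [zsmul_eq_mul]
      push_cast
      have hpow2 : (p : ZMod (p ^ i)) ^ (i - a - c) * (p : ZMod (p ^ i)) ^ c
          = (p : ZMod (p ^ i)) ^ (i - a) := by
        rw [← pow_add]; congr 1; omega
      linear_combination ((k : ZMod (p ^ i)) * (b : ZMod (p ^ i))) * hpow2
  · rintro ⟨t, rfl⟩
    refine ⟨0, t, ?_⟩
    simp

theorem nsmul_zmod_eq_zero (hp : p ≠ 0) (z : ZMod (p ^ i) × ZMod (p ^ i)) :
    p ^ i • z = 0 := by
  have h0 : (p : ZMod (p ^ i)) ^ i = 0 := by exact_mod_cast ZMod.natCast_self (p ^ i)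
  ext <;> simp [nsmul_eq_mul, h0]

theorem exp_F (hp : p.Prime) (hi : 1 ≤ i) {x : ℕ × ℕ × ℕ} (hx : P p i x) :
    AddMonoid.exponent (F p i x) = p ^ i := by
  obtain ⟨a, b, c⟩ := x
  have hdvd : AddMonoid.exponent (F p i (a, b, c)) ∣ p ^ i := by
    apply AddMonoid.exponent_dvd_of_forall_nsmul_eq_zero
    intro g
    apply Subtype.ext
    simp only [AddSubmonoidClass.coe_nsmul, ZeroMemClass.coe_zero,
      nsmul_zmod_eq_zero hp.ne_zero]
  -- find an element g of F with p^(i-1) • g ≠ 0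
  obtain ⟨g, hgF, hgne⟩ : ∃ g ∈ F p i (a, b, c),
      p ^ (i - 1) • g ≠ 0 := by
    obtain ⟨hb, hcase⟩ := hx
    dsimp only at hb hcase
    have hpow_ne : ((p ^ (i - 1) : ℕ) : ZMod (p ^ i)) ≠ 0 := by
      rw [Ne, ZMod.natCast_eq_zero_iff,
        Nat.pow_dvd_pow_iff_le_right hp.one_lt]
      omega
    rcases hcase with ⟨rfl, hci⟩ | ⟨ha1, hac, hbc⟩
    · refine ⟨_, subset_closure (Set.mem_insert _ _), ?_⟩
      intro hzero
      have h := congrArg Prod.fst hzero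
      simp only [Prod.smul_mk, Prod.fst_zero] at h
      rw [pow_zero, nsmul_eq_mul, mul_one] at h
      exact hpow_ne (by exact_mod_cast h)
    · rcases Nat.eq_zero_or_pos c with rfl | hc1
      · refine ⟨_, subset_closure (Set.mem_insert_of_mem _ rfl), ?_⟩
        intro hzero
        have h := congrArg Prod.snd hzero
        simp only [Prod.smul_mk, Prod.snd_zero] at h
        rw [pow_zero, nsmul_eq_mul, mul_one] at h
        exact hpow_ne (by exact_mod_cast h)
      · have hpb : ¬ p ∣ b := by
          rcases hbc with h | h
          · omega
          · exact h
        refine ⟨_, subset_closure (Set.mem_insert _ _), ?_⟩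
        intro hzero
        have h := congrArg Prod.snd hzero
        simp only [Prod.smul_mk, Prod.snd_zero] at h
        rw [nsmul_eq_mul] at h
        have h2 : ((p ^ (i - 1) * b : ℕ) : ZMod (p ^ i)) = 0 := by push_cast at h ⊢; exact h
        rw [ZMod.natCast_eq_zero_iff] at h2
        rename' h2 => this
        have hi' : p ^ i = p ^ (i - 1) * p := by rw [← pow_succ]; congr 1; omega
        rw [hi'] at this
        exact hpb ((Nat.mul_dvd_mul_iff_left (Nat.pow_pos hp.pos)).mp this)
  have hnd : ¬ AddMonoid.exponent (F p i (a, b, c)) ∣ p ^ (i - 1) := by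
    intro hd
    have h := AddMonoid.exponent_dvd_iff_forall_nsmul_eq_zero.mp hd ⟨g, hgF⟩
    apply hgne
    have hcoe := congrArg (Subtype.val) h
    simp only [AddSubmonoidClass.coe_nsmul, ZeroMemClass.coe_zero] at hcoe
    exact hcoe
  obtain ⟨k, hk, hke⟩ := (Nat.dvd_prime_pow hp).mp hdvd
  rcases Nat.lt_or_ge k i with hlt | hge
  · exact absurd (hke ▸ pow_dvd_pow p (by omega : k ≤ i - 1)) hnd
  · rw [hke]; congr 1; omega

theorem P_bounds {x : ℕ × ℕ × ℕ} (hx : P p i x) : x.1 ≤ i ∧ x.2.2 ≤ i := by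
  obtain ⟨-, h⟩ := hx
  rcases h with ⟨h1, h2⟩ | ⟨h1, h2, -⟩ <;> omega

theorem le_zmul (hp : p.Prime) {a a' : ℕ} (ha : a ≤ i) (ha' : a' ≤ i)
    (h : zmultiples ((p : ZMod (p ^ i)) ^ a) ≤ zmultiples ((p : ZMod (p ^ i)) ^ a')) :
    a' ≤ a := by
  rcases eq_or_lt_of_le ha with rfl | hlt
  · exact ha'
  · have hm := dvd_val_of_mem_zmul hp.ne_zero ha' (h (mem_zmultiples _))
    rw [← natCast_pow_eq, ZMod.val_cast_of_lt (Nat.pow_lt_pow_right hp.one_lt hlt)] at hm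
    exact (Nat.pow_dvd_pow_iff_le_right hp.one_lt).mp hm

theorem nat_eq_of_sub_mem_aux (hp : p.Prime) {c b b' : ℕ} (hc : c ≤ i) (hb : b < p ^ c)
    (hle : b' ≤ b)
    (h : ((b : ZMod (p ^ i)) - (b' : ZMod (p ^ i))) ∈ zmultiples ((p : ZMod (p ^ i)) ^ c)) :
    b = b' := by
  haveI : NeZero (p ^ i) := ⟨pow_ne_zero i hp.ne_zero⟩
  have hd := dvd_val_of_mem_zmul hp.ne_zero hc h
  have hcast : ((b - b' : ℕ) : ZMod (p ^ i)) = (b : ZMod (p ^ i)) - b' := by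
    push_cast [hle]; ring
  have hlt : b - b' < p ^ i := lt_of_lt_of_le (by omega) (Nat.pow_le_pow_right hp.pos hc)
  rw [← hcast, ZMod.val_cast_of_lt hlt] at hd
  have := Nat.eq_zero_of_dvd_of_lt hd
  omega

theorem nat_eq_of_sub_mem (hp : p.Prime) {c b b' : ℕ} (hc : c ≤ i) (hb : b < p ^ c)
    (hb' : b' < p ^ c)
    (h : ((b : ZMod (p ^ i)) - (b' : ZMod (p ^ i))) ∈ zmultiples ((p : ZMod (p ^ i)) ^ c)) :
    b = b' := by
  rcases le_total b' b with hle | hle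
  · exact nat_eq_of_sub_mem_aux hp hc hb hle h
  · have h' := neg_mem h
    rw [neg_sub] at h'
    exact (nat_eq_of_sub_mem_aux hp hc hb' hle h').symm

theorem F_inj (hp : p.Prime) {x y : ℕ × ℕ × ℕ} (hx : P p i x) (hy : P p i y)
    (h : F p i x = F p i y) : x = y := by
  obtain ⟨hxa, hxc⟩ := P_bounds hx
  obtain ⟨hya, hyc⟩ := P_bounds hy
  obtain ⟨a, b, c⟩ := x
  obtain ⟨a', b', c'⟩ := y
  dsimp only at hxa hxc hya hyc
  have h1 := congrArg (AddSubgroup.map (AddMonoidHom.fst (ZMod (p ^ i)) (ZMod (p ^ i)))) h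
  rw [map_fst_F, map_fst_F] at h1
  have haa : a = a' := le_antisymm (le_zmul hp hya hxa h1.ge) (le_zmul hp hxa hya h1.le)
  have h2 := congrArg (AddSubgroup.comap (AddMonoidHom.inr (ZMod (p ^ i)) (ZMod (p ^ i)))) h
  rw [comap_inl_F hp hx, comap_inl_F hp hy] at h2
  have hcc : c = c' := le_antisymm (le_zmul hp hyc hxc h2.ge) (le_zmul hp hxc hyc h2.le)
  subst haa hcc
  have hm1 : ((p : ZMod (p ^ i)) ^ a, (b : ZMod (p ^ i))) ∈ F p i (a, b, c) :=
    subset_closure (Set.mem_insert _ _)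
  have hm2 : ((p : ZMod (p ^ i)) ^ a, (b' : ZMod (p ^ i))) ∈ F p i (a, b, c) := by
    rw [h]; exact AddSubgroup.subset_closure (Set.mem_insert _ _)
  have hdiff := sub_mem hm1 hm2
  have hmem : ((b : ZMod (p ^ i)) - (b' : ZMod (p ^ i))) ∈
      (F p i (a, b, c)).comap (AddMonoidHom.inr (ZMod (p ^ i)) (ZMod (p ^ i))) := by
    rw [mem_comap, AddMonoidHom.inr_apply]
    convert hdiff using 1
    simp [Prod.mk_sub_mk]
  rw [comap_inl_F hp hx] at hmem
  have hbb : b = b' := nat_eq_of_sub_mem hp hxc hx.1 hy.1 hmem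
  rw [hbb]

set_option maxHeartbeats 1000000 in
theorem F_surj (hp : p.Prime) (hi : 1 ≤ i)
    (H : AddSubgroup (ZMod (p ^ i) × ZMod (p ^ i)))
    (hH : AddMonoid.exponent H = p ^ i) : ∃ x, P p i x ∧ F p i x = H := by
  haveI : NeZero (p ^ i) := ⟨pow_ne_zero i hp.ne_zero⟩
  obtain ⟨a, ha, hA⟩ := exists_eq_zmul hp
    (H.map (AddMonoidHom.fst (ZMod (p ^ i)) (ZMod (p ^ i))))
  obtain ⟨c, hc, hC⟩ := exists_eq_zmul hp
    (H.comap (AddMonoidHom.inr (ZMod (p ^ i)) (ZMod (p ^ i))))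
  have hmem : (p : ZMod (p ^ i)) ^ a ∈
      H.map (AddMonoidHom.fst (ZMod (p ^ i)) (ZMod (p ^ i))) := by
    rw [hA]; exact mem_zmultiples _
  obtain ⟨g, hgH, hg1⟩ := hmem
  obtain ⟨g1, w⟩ := g
  simp only [AddMonoidHom.coe_fst] at hg1
  subst hg1
  have hpcH : ((0 : ZMod (p ^ i)), (p : ZMod (p ^ i)) ^ c) ∈ H := by
    have : (p : ZMod (p ^ i)) ^ c ∈
        H.comap (AddMonoidHom.inr (ZMod (p ^ i)) (ZMod (p ^ i))) := by
      rw [hC]; exact mem_zmultiples _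
    rwa [mem_comap, AddMonoidHom.inr_apply] at this
  have hHeq : H = AddSubgroup.closure {((p : ZMod (p ^ i)) ^ a, w), (0, (p : ZMod (p ^ i)) ^ c)} := by
    apply le_antisymm
    · rintro ⟨u, v⟩ huv
      have hu : u ∈ zmultiples ((p : ZMod (p ^ i)) ^ a) := by
        rw [← hA]; exact AddSubgroup.mem_map_of_mem _ huv
      rw [mem_zmultiples_iff] at hu
      obtain ⟨s, hs⟩ := hu
      have h2 : v - s • w ∈ zmultiples ((p : ZMod (p ^ i)) ^ c) := by
        rw [← hC, mem_comap, AddMonoidHom.inr_apply]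
        have hsub := sub_mem huv (zsmul_mem hgH s)
        convert hsub using 1
        simp only [Prod.smul_mk, Prod.mk_sub_mk, Prod.mk.injEq]
        exact ⟨by rw [hs, sub_self], trivial⟩
      rw [mem_zmultiples_iff] at h2
      obtain ⟨t, ht⟩ := h2
      rw [AddSubgroup.mem_closure_pair]
      refine ⟨s, t, ?_⟩
      simp only [Prod.smul_mk, Prod.mk_add_mk, Prod.mk.injEq, smul_zero, add_zero]
      constructor
      · exact hs
      · rw [ht]; ring
    · rw [closure_le]
      intro z hz
      simp only [Set.mem_insert_iff, Set.mem_singleton_iff] at hz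
      rcases hz with rfl | rfl
      · exact hgH
      · exact hpcH
  obtain ⟨b, hbdef⟩ : ∃ b, b = w.val % p ^ c := ⟨_, rfl⟩
  have hble : b < p ^ c := by rw [hbdef]; exact Nat.mod_lt _ (pow_pos hp.pos c)
  have hbR : (b : ZMod (p ^ i)) = w - ((w.val / p ^ c : ℕ) : ZMod (p ^ i)) * (p : ZMod (p ^ i)) ^ c := by
    have hsplit : w.val = p ^ c * (w.val / p ^ c) + b := by
      rw [hbdef]; exact (Nat.div_add_mod w.val (p ^ c)).symm
    have h := congrArg (fun m : ℕ => (m : ZMod (p ^ i))) hsplit.symm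
    push_cast at h
    simp only [ZMod.natCast_val, ZMod.cast_id] at h
    linear_combination h
  have hFeq : F p i (a, b, c) = H := by
    have e1 : ((p : ZMod (p ^ i)) ^ a, (b : ZMod (p ^ i))) =
        ((p : ZMod (p ^ i)) ^ a, w) - (w.val / p ^ c) • (0, (p : ZMod (p ^ i)) ^ c) := by
      simp only [Prod.smul_mk, Prod.mk_sub_mk, Prod.mk.injEq, smul_zero, sub_zero]
      refine ⟨by trivial, ?_⟩
      rw [hbR, nsmul_eq_mul]
    have m1 : ((p : ZMod (p ^ i)) ^ a, w) ∈ AddSubgroup.closure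
        ({((p : ZMod (p ^ i)) ^ a, w), (0, (p : ZMod (p ^ i)) ^ c)} :
          Set (ZMod (p ^ i) × ZMod (p ^ i))) :=
      AddSubgroup.subset_closure (by simp)
    have m2 : ((0 : ZMod (p ^ i)), (p : ZMod (p ^ i)) ^ c) ∈ AddSubgroup.closure
        ({((p : ZMod (p ^ i)) ^ a, w), (0, (p : ZMod (p ^ i)) ^ c)} :
          Set (ZMod (p ^ i) × ZMod (p ^ i))) :=
      AddSubgroup.subset_closure (by simp)
    have m1' : ((p : ZMod (p ^ i)) ^ a, (b : ZMod (p ^ i))) ∈ AddSubgroup.closure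
        ({((p : ZMod (p ^ i)) ^ a, (b : ZMod (p ^ i))), (0, (p : ZMod (p ^ i)) ^ c)} :
          Set (ZMod (p ^ i) × ZMod (p ^ i))) :=
      AddSubgroup.subset_closure (by simp)
    have m2' : ((0 : ZMod (p ^ i)), (p : ZMod (p ^ i)) ^ c) ∈ AddSubgroup.closure
        ({((p : ZMod (p ^ i)) ^ a, (b : ZMod (p ^ i))), (0, (p : ZMod (p ^ i)) ^ c)} :
          Set (ZMod (p ^ i) × ZMod (p ^ i))) :=
      AddSubgroup.subset_closure (by simp)
    rw [hHeq]
    show AddSubgroup.closure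
        {((p : ZMod (p ^ i)) ^ a, (b : ZMod (p ^ i))), (0, (p : ZMod (p ^ i)) ^ c)} = _
    apply le_antisymm
    · rw [AddSubgroup.closure_le]
      intro z hz
      simp only [Set.mem_insert_iff, Set.mem_singleton_iff] at hz
      rcases hz with rfl | rfl
      · rw [e1]
        exact sub_mem m1 (nsmul_mem m2 _)
      · exact m2
    · rw [AddSubgroup.closure_le]
      intro z hz
      simp only [Set.mem_insert_iff, Set.mem_singleton_iff] at hz
      rcases hz with rfl | rfl
      · have e2 : ((p : ZMod (p ^ i)) ^ a, w) =
            ((p : ZMod (p ^ i)) ^ a, (b : ZMod (p ^ i))) +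
              (w.val / p ^ c) • (0, (p : ZMod (p ^ i)) ^ c) := by
          rw [e1]; abel
        rw [e2]
        exact add_mem m1' (nsmul_mem m2' _)
      · exact m2'
  refine ⟨(a, b, c), ⟨hble, ?_⟩, hFeq⟩
  rcases Nat.eq_zero_or_pos a with rfl | ha1
  · exact Or.inl ⟨rfl, hc⟩
  · right
    rcases Nat.eq_zero_or_pos c with rfl | hc1
    · refine ⟨ha1, ?_, Or.inl rfl⟩
      show a + 0 ≤ i
      omega
    · have hpw : ¬ p ∣ w.val := by
        intro hdvd
        have hexp : AddMonoid.exponent H ∣ p ^ (i - 1) := by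
          apply AddMonoid.exponent_dvd_of_forall_nsmul_eq_zero
          rintro ⟨z, hz⟩
          apply Subtype.ext
          simp only [AddSubmonoidClass.coe_nsmul, ZeroMemClass.coe_zero]
          rw [hHeq, AddSubgroup.mem_closure_pair] at hz
          obtain ⟨s, t, hst⟩ := hz
          rw [← hst]
          obtain ⟨m, hm⟩ := hdvd
          have hwm : w = ((p * m : ℕ) : ZMod (p ^ i)) := by
            rw [← hm, ZMod.natCast_zmod_val]
          have hc' : (p : ZMod (p ^ i)) ^ c = (p : ZMod (p ^ i)) * (p : ZMod (p ^ i)) ^ (c - 1) := by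
            rw [← pow_succ']
            congr 1
            omega
          have hppow : ((p : ZMod (p ^ i))) ^ (i - 1) * (p : ZMod (p ^ i)) = 0 := by
            rw [← pow_succ, ppow_eq_zero hp.ne_zero (by omega)]
          have hppow2 : ((p : ZMod (p ^ i))) ^ (i - 1) * (p : ZMod (p ^ i)) ^ a = 0 := by
            rw [← pow_add, ppow_eq_zero hp.ne_zero (by omega)]
          set X : ZMod (p ^ i) := (s : ZMod (p ^ i)) * (m : ZMod (p ^ i)) +
            (t : ZMod (p ^ i)) * (p : ZMod (p ^ i)) ^ (c - 1) with hXdef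
          have hx1 : s • ((p : ZMod (p ^ i)) ^ a, w) + t • ((0 : ZMod (p ^ i)), (p : ZMod (p ^ i)) ^ c)
              = ((s : ZMod (p ^ i)) * (p : ZMod (p ^ i)) ^ a, (p : ZMod (p ^ i)) * X) := by
            rw [hwm, hc']
            simp only [Prod.smul_mk, Prod.mk_add_mk, zsmul_eq_mul, smul_zero, add_zero,
              Prod.mk.injEq]
            refine ⟨trivial, by push_cast; ring⟩
          rw [hx1]
          simp only [Prod.smul_mk, nsmul_eq_mul, natCast_pow_eq]
          rw [Prod.mk_eq_zero]
          constructor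
          · calc (p : ZMod (p ^ i)) ^ (i - 1) * ((s : ZMod (p ^ i)) * (p : ZMod (p ^ i)) ^ a)
                = (s : ZMod (p ^ i)) * ((p : ZMod (p ^ i)) ^ (i - 1) * (p : ZMod (p ^ i)) ^ a) := by
                  ring
              _ = 0 := by rw [hppow2, mul_zero]
          · calc (p : ZMod (p ^ i)) ^ (i - 1) * ((p : ZMod (p ^ i)) * X)
                = ((p : ZMod (p ^ i)) ^ (i - 1) * (p : ZMod (p ^ i))) * X := by ring
              _ = 0 := by rw [hppow, zero_mul]
        rw [hH] at hexp
        rw [Nat.pow_dvd_pow_iff_le_right hp.one_lt] at hexp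
        omega
      have hpb : ¬ p ∣ b := by
        intro hd
        apply hpw
        have : w.val = p ^ c * (w.val / p ^ c) + b := by
          rw [hbdef]; exact (Nat.div_add_mod w.val (p ^ c)).symm
        rw [this]
        exact dvd_add (Dvd.dvd.mul_right (dvd_pow_self p (by omega)) _) hd
      have hac : a + c ≤ i := by
        have h1 : ((0 : ZMod (p ^ i)), ((p ^ (i - a) : ℕ) : ZMod (p ^ i)) * w) ∈ H := by
          have hnsm := nsmul_mem (hgH : ((p : ZMod (p ^ i)) ^ a, w) ∈ H) (p ^ (i - a))
          convert hnsm using 1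
          simp only [Prod.smul_mk, Prod.mk.injEq]
          constructor
          · rw [nsmul_eq_mul, ← natCast_pow_eq, ← Nat.cast_mul, ← pow_add, eq_comm,
              ZMod.natCast_eq_zero_iff]
            exact pow_dvd_pow p (by omega)
          · rw [nsmul_eq_mul]
        have h2 : ((p ^ (i - a) : ℕ) : ZMod (p ^ i)) * w ∈ zmultiples ((p : ZMod (p ^ i)) ^ c) := by
          rw [← hC, mem_comap, AddMonoidHom.inr_apply]
          exact h1
        have h3 := dvd_val_of_mem_zmul hp.ne_zero hc h2
        have h4 : ((p ^ (i - a) : ℕ) : ZMod (p ^ i)) * w = ((p ^ (i - a) * w.val : ℕ) : ZMod (p ^ i)) := by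
          conv_lhs => rw [← ZMod.natCast_zmod_val w]
          push_cast
          ring
        rw [h4, ZMod.val_natCast] at h3
        have h6 : p ^ c ∣ p ^ (i - a) * w.val := (Nat.dvd_mod_iff (pow_dvd_pow p hc)).mp h3
        have h7 : p ^ c ∣ p ^ (i - a) :=
          (Nat.Coprime.dvd_of_dvd_mul_right ((hp.coprime_iff_not_dvd.mpr hpw).pow_left _) h6)
        have := (Nat.pow_dvd_pow_iff_le_right hp.one_lt).mp h7
        omega
      exact ⟨ha1, hac, Or.inr hpb⟩



def U (p c : ℕ) : Finset ℕ := (range (p ^ c)).filter (fun b => c = 0 ∨ ¬ p ∣ b)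

theorem card_multiples (hp : p.Prime) (c : ℕ) :
    ((range (p ^ (c + 1))).filter (fun b => p ∣ b)).card = p ^ c := by
  have himg : (range (p ^ c)).image (fun m => p * m) =
      (range (p ^ (c + 1))).filter (fun b => p ∣ b) := by
    ext x
    simp only [mem_image, mem_filter, mem_range]
    constructor
    · rintro ⟨m, hm, rfl⟩
      refine ⟨?_, dvd_mul_right p m⟩
      rw [pow_succ']
      exact (mul_lt_mul_iff_right₀ hp.pos).mpr hm
    · rintro ⟨hx, m, rfl⟩
      refine ⟨m, ?_, rfl⟩
      rw [pow_succ'] at hx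
      exact lt_of_mul_lt_mul_left hx (Nat.zero_le p)
  rw [← himg, card_image_of_injective _ (mul_right_injective₀ hp.ne_zero), card_range]

theorem card_U_succ (hp : p.Prime) (c : ℕ) : (U p (c + 1)).card = p ^ (c + 1) - p ^ c := by
  have h1 : U p (c + 1) = (range (p ^ (c + 1))).filter (fun b => ¬ p ∣ b) := by
    apply filter_congr
    intro x _
    simp
  have h2 := card_filter_add_card_filter_not
    (s := range (p ^ (c + 1))) (p := fun b => p ∣ b)
  rw [card_multiples hp c, card_range] at h2
  have h3 : (filter (fun b => ¬ p ∣ b) (range (p ^ (c + 1)))).card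
      = p ^ (c + 1) - p ^ c := by omega
  rw [h1]
  convert h3 using 2

theorem card_U_zero : (U p 0).card = 1 := by
  have : U p 0 = {0} := by
    ext x
    simp [U, Nat.lt_one_iff]
  rw [this, card_singleton]

theorem sum_card_U (hp : p.Prime) (m : ℕ) :
    ∑ c ∈ range (m + 1), (U p c).card = p ^ m := by
  induction m with
  | zero => simp [card_U_zero]
  | succ n ih =>
    rw [sum_range_succ, ih, card_U_succ hp]
    have h1 : p ^ n ≤ p ^ (n + 1) := Nat.pow_le_pow_right hp.pos (Nat.le_succ n)
    omega

def T0 (p i : ℕ) : Finset (ℕ × ℕ × ℕ) :=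
  (range (i + 1)).biUnion (fun c => (range (p ^ c)).image (fun b => (0, b, c)))

def T1 (p i : ℕ) : Finset (ℕ × ℕ × ℕ) :=
  (range i).biUnion (fun a' =>
    (range (i - a')).biUnion (fun c => (U p c).image (fun b => (a' + 1, b, c))))

def T (p i : ℕ) : Finset (ℕ × ℕ × ℕ) := T0 p i ∪ T1 p i

theorem card_T0 : (T0 p i).card = ∑ c ∈ range (i + 1), p ^ c := by
  rw [T0, card_biUnion]
  · refine sum_congr rfl (fun c _ => ?_)
    rw [card_image_of_injective, card_range]
    intro x y hxy
    simpa using hxy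
  · intro c1 _ c2 _ hne
    rw [Function.onFun, Finset.disjoint_left]
    rintro x hx1 hx2
    simp only [mem_image] at hx1 hx2
    obtain ⟨b1, -, rfl⟩ := hx1
    obtain ⟨b2, -, h⟩ := hx2
    simp only [Prod.mk.injEq] at h
    exact hne (h.2.2.symm)

theorem card_T1 (hp : p.Prime) : (T1 p i).card = ∑ k ∈ range i, p ^ k := by
  rw [T1, card_biUnion]
  · have hstep : ∀ a' ∈ range i,
        ((range (i - a')).biUnion (fun c => (U p c).image (fun b => (a' + 1, b, c)))).card
          = p ^ (i - 1 - a') := by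
      intro a' ha'
      rw [mem_range] at ha'
      rw [card_biUnion]
      · have hm : i - a' = (i - 1 - a') + 1 := by omega
        rw [hm, ← sum_card_U hp (i - 1 - a')]
        refine sum_congr rfl (fun c _ => ?_)
        rw [card_image_of_injective]
        intro x y hxy
        simpa using hxy
      · intro c1 _ c2 _ hne
        rw [Function.onFun, Finset.disjoint_left]
        rintro x hx1 hx2
        simp only [mem_image] at hx1 hx2
        obtain ⟨b1, -, rfl⟩ := hx1
        obtain ⟨b2, -, h⟩ := hx2
        simp only [Prod.mk.injEq] at h
        exact hne (h.2.2.symm)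
    rw [sum_congr rfl hstep]
    exact sum_range_reflect (fun k => p ^ k) i
  · intro a1 _ a2 _ hne
    rw [Function.onFun, Finset.disjoint_left]
    rintro x hx1 hx2
    simp only [mem_biUnion, mem_image] at hx1 hx2
    obtain ⟨c1, -, b1, -, rfl⟩ := hx1
    obtain ⟨c2, -, b2, -, h⟩ := hx2
    simp only [Prod.mk.injEq] at h
    exact hne (by omega)

theorem card_T (hp : p.Prime) :
    (T p i).card = (∑ c ∈ range (i + 1), p ^ c) + ∑ k ∈ range i, p ^ k := by
  rw [T, card_union_of_disjoint, card_T0, card_T1 hp]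
  rw [Finset.disjoint_left]
  rintro x hx1 hx2
  simp only [T0, T1, mem_biUnion, mem_image] at hx1 hx2
  obtain ⟨c1, -, b1, -, rfl⟩ := hx1
  obtain ⟨a2, -, c2, -, b2, -, h⟩ := hx2
  simp only [Prod.mk.injEq] at h
  omega

theorem mem_T {x : ℕ × ℕ × ℕ} : x ∈ T p i ↔ P p i x := by
  obtain ⟨a, b, c⟩ := x
  simp only [T, T0, T1, U, P, mem_union, mem_biUnion, mem_image, mem_range, mem_filter,
    Prod.mk.injEq]
  constructor
  · rintro (⟨c', hc', b', hb', rfl, rfl, rfl⟩ | ⟨a', ha', c', hc', b', ⟨hb', hor⟩, rfl, rfl, rfl⟩)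
    · exact ⟨hb', Or.inl ⟨rfl, by omega⟩⟩
    · exact ⟨hb', Or.inr ⟨by omega, by omega, hor⟩⟩
  · rintro ⟨hb, (⟨rfl, hci⟩ | ⟨ha1, haci, hor⟩)⟩
    · exact Or.inl ⟨c, by omega, b, hb, rfl, rfl, rfl⟩
    · refine Or.inr ⟨a - 1, by omega, c, by omega, b, ⟨hb, hor⟩, by omega, rfl, rfl⟩


end Stmt2Aux

theorem stmt_2 (p : ℕ) (hp : p.Prime) (i : ℕ) (hi : 1 ≤ i) :
    Nat.card {H : AddSubgroup (ZMod (p ^ i) × ZMod (p ^ i)) //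
        AddMonoid.exponent H = p ^ i} =
      1 + (p + 1) * (p ^ i - 1) / (p - 1) ∧
    Nat.card {H : AddSubgroup (ZMod (p ^ i) × ZMod (p ^ i)) //
        AddMonoid.exponent H = p ^ i} =
      (p ^ (i + 1) + p ^ i - 2) / (p - 1) := by
  have hp2 := hp.two_le
  have key : Nat.card {H : AddSubgroup (ZMod (p ^ i) × ZMod (p ^ i)) //
      AddMonoid.exponent H = p ^ i} = (Stmt2Aux.T p i).card := by
    rw [← Nat.card_eq_finsetCard]
    apply Nat.card_congr
    apply Equiv.symm
    refine Equiv.ofBijective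
      (fun x => ⟨Stmt2Aux.F p i x.1, Stmt2Aux.exp_F hp hi (Stmt2Aux.mem_T.mp x.2)⟩) ⟨?_, ?_⟩
    · rintro ⟨x, hx⟩ ⟨y, hy⟩ hxy
      simp only [Subtype.mk.injEq] at hxy ⊢
      exact Stmt2Aux.F_inj hp (Stmt2Aux.mem_T.mp hx) (Stmt2Aux.mem_T.mp hy) hxy
    · rintro ⟨H, hH⟩
      obtain ⟨x, hPx, hFx⟩ := Stmt2Aux.F_surj hp hi H hH
      exact ⟨⟨x, Stmt2Aux.mem_T.mpr hPx⟩, Subtype.ext hFx⟩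
  have hS : ∀ m : ℕ, (p - 1) * (∑ k ∈ Finset.range m, p ^ k) = p ^ m - 1 := by
    intro m
    induction m with
    | zero => simp
    | succ n ih =>
      have hpn : 1 ≤ p ^ n := Nat.one_le_pow _ _ hp.pos
      have hle : p ^ n ≤ p ^ (n + 1) := Nat.pow_le_pow_right hp.pos (Nat.le_succ n)
      have h2' : p * p ^ n = p ^ (n + 1) := by rw [pow_succ]; ring
      rw [Finset.sum_range_succ, Nat.mul_add, ih, Nat.sub_mul, one_mul, h2']
      omega
  have hsum : ∑ c ∈ Finset.range (i + 1), p ^ c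
      = 1 + p * ∑ k ∈ Finset.range i, p ^ k := by
    rw [geom_sum_succ]
    exact add_comm _ _
  have hcardT : (Stmt2Aux.T p i).card = 1 + (p + 1) * ∑ k ∈ Finset.range i, p ^ k := by
    rw [Stmt2Aux.card_T hp, hsum]
    have h : (p + 1) * ∑ k ∈ Finset.range i, p ^ k
        = p * (∑ k ∈ Finset.range i, p ^ k) + ∑ k ∈ Finset.range i, p ^ k := by ring
    omega
  have hgeom : (p + 1) * (p ^ i - 1) / (p - 1) = (p + 1) * ∑ k ∈ Finset.range i, p ^ k := by
    have h : (p + 1) * (p ^ i - 1) = (p - 1) * ((p + 1) * ∑ k ∈ Finset.range i, p ^ k) := by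
      rw [← hS i]; ring
    rw [h, Nat.mul_div_cancel_left _ (by omega : 0 < p - 1)]
  have hpi : 1 ≤ p ^ i := Nat.one_le_pow _ _ hp.pos
  have hple : p ≤ p ^ (i + 1) := by
    calc p = p ^ 1 := (pow_one p).symm
      _ ≤ p ^ (i + 1) := Nat.pow_le_pow_right hp.pos (by omega)
  constructor
  · rw [key, hcardT, hgeom]
  · rw [key, hcardT]
    have h1 : p ^ (i + 1) + p ^ i - 2
        = (p - 1) * (1 + (p + 1) * ∑ k ∈ Finset.range i, p ^ k) := by
      have hmul : (p - 1) * ((p + 1) * ∑ k ∈ Finset.range i, p ^ k)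
          = (p + 1) * (p ^ i - 1) := by rw [← hS i]; ring
      have hexp : (p + 1) * (p ^ i - 1) = p ^ (i + 1) + p ^ i - (p + 1) := by
        zify [hpi, (by omega : p + 1 ≤ p ^ (i + 1) + p ^ i)]
        rw [pow_succ]
        ring
      rw [Nat.mul_add, mul_one, hmul, hexp]
      omega
    rw [h1, Nat.mul_div_cancel_left _ (by omega : 0 < p - 1)]
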